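/- arXiv:1503.04346 — 10 statements merged into one kernel-verified Lean document; each statement's English description precedes it below -/
import Mathlib

section
/- Let F be an archimedean linearly ordered field (every element is bounded in absolute value by a natural number). For A, B ∈ Mₙ(F), if ker B ⊆ ker A then there exists r ∈ ℕ such that r·BᵀB − AᵀA is positive semidefinite. -/
open Matrix

def PSD {F : Type*} [Field F] [LinearOrder F] [IsStrictOrderedRing F] {n : ℕ} (M : Matrix (Fin n) (Fin n) F) : Prop :=
  ∀ v : Fin n → F, 0 ≤ v ⬝ᵥ M.mulVec v

theorem stmt_2 (F : Type*) [Field F] [LinearOrder F] [IsStrictOrderedRing F]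
    (harch : ∀ a : F, ∃ m : ℕ, |a| ≤ (m : F)) (n : ℕ)
    (A B : Matrix (Fin n) (Fin n) F)
    (hker : ∀ x : Fin n → F, B.mulVec x = 0 → A.mulVec x = 0) :
    ∃ r : ℕ, PSD ((r : F) • (Bᵀ * B) - Aᵀ * A) := by
  classical
  -- factor A = C * B
  set f := Matrix.toLin' A with hf
  set g := Matrix.toLin' B with hg
  have hkerle : LinearMap.ker g ≤ LinearMap.ker f := by
    intro x hx
    simp only [LinearMap.mem_ker] at hx ⊢
    exact hker x hx
  set K := LinearMap.ker g
  let fbar : ((Fin n → F) ⧸ K) →ₗ[F] (Fin n → F) := K.liftQ f hkerle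
  let gbar : ((Fin n → F) ⧸ K) →ₗ[F] (Fin n → F) := K.liftQ g le_rfl
  have hgbar : LinearMap.ker gbar = ⊥ := Submodule.ker_liftQ_eq_bot _ _ _ le_rfl
  obtain ⟨li, hli⟩ := gbar.exists_leftInverse_of_injective hgbar
  set h := fbar ∘ₗ li with hh
  have hfac : h ∘ₗ g = f := by
    have h1 : g = gbar ∘ₗ K.mkQ := rfl
    have h2 : fbar ∘ₗ K.mkQ = f := rfl
    calc h ∘ₗ g = fbar ∘ₗ ((li ∘ₗ gbar) ∘ₗ K.mkQ) := by
          rw [h1]; ext x; rfl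
      _ = f := by rw [hli]; exact h2
  set C := LinearMap.toMatrix' h with hC
  have hACB : A = C * B := by
    have := congrArg LinearMap.toMatrix' hfac
    rwa [LinearMap.toMatrix'_comp, hg, hf, LinearMap.toMatrix'_toLin',
      LinearMap.toMatrix'_toLin', ← hC, eq_comm] at this
  -- choose r ≥ sum of squares of entries of C
  obtain ⟨r, hr⟩ := harch (∑ i : Fin n, ∑ j : Fin n, (C i j) ^ 2)
  have hsum : (∑ i : Fin n, ∑ j : Fin n, (C i j) ^ 2) ≤ (r : F) :=
    le_trans (le_abs_self _) hr
  refine ⟨r, fun v => ?_⟩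
  have key : ∀ w : Fin n → F, (C.mulVec w) ⬝ᵥ (C.mulVec w) ≤ (r : F) * (w ⬝ᵥ w) := by
    intro w
    have hw : (0:F) ≤ w ⬝ᵥ w := by
      simp only [dotProduct]
      exact Finset.sum_nonneg fun i _ => mul_self_nonneg _
    calc (C.mulVec w) ⬝ᵥ (C.mulVec w)
        = ∑ i : Fin n, (∑ j : Fin n, C i j * w j) ^ 2 := by
          simp [dotProduct, Matrix.mulVec, sq]
      _ ≤ ∑ i : Fin n, (∑ j : Fin n, (C i j)^2) * (∑ j : Fin n, (w j)^2) := by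
          refine Finset.sum_le_sum fun i _ => ?_
          exact Finset.sum_mul_sq_le_sq_mul_sq _ _ _
      _ = (∑ i : Fin n, ∑ j : Fin n, (C i j)^2) * (w ⬝ᵥ w) := by
          rw [← Finset.sum_mul]; congr 1; simp [dotProduct, sq]
      _ ≤ (r : F) * (w ⬝ᵥ w) := mul_le_mul_of_nonneg_right hsum hw
  have expand : v ⬝ᵥ ((r : F) • (Bᵀ * B) - Aᵀ * A).mulVec v
      = (r : F) * ((B.mulVec v) ⬝ᵥ (B.mulVec v)) - (A.mulVec v) ⬝ᵥ (A.mulVec v) := by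
    rw [Matrix.sub_mulVec, dotProduct_sub, Matrix.smul_mulVec, dotProduct_smul]
    congr 1
    · rw [smul_eq_mul]
      congr 1
      rw [← Matrix.mulVec_mulVec, Matrix.dotProduct_mulVec, Matrix.vecMul_transpose]
    · rw [← Matrix.mulVec_mulVec, Matrix.dotProduct_mulVec, Matrix.vecMul_transpose]
  show (0:F) ≤ _
  rw [expand, sub_nonneg, hACB, ← Matrix.mulVec_mulVec]
  exact key (B.mulVec v)
end

section
/- Let F be a linearly ordered field. If A ~ B (archimedean equivalence) in Mₙ(F), then A·C ~ B·C for every C ∈ Mₙ(F). -/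
open Matrix

def ArchSim {F : Type*} [Field F] [LinearOrder F] [IsStrictOrderedRing F] {n : ℕ}
    (A B : Matrix (Fin n) (Fin n) F) : Prop :=
  ∃ r : ℕ, PSD ((r : F) • (Bᵀ * B) - Aᵀ * A) ∧ PSD ((r : F) • (Aᵀ * A) - Bᵀ * B)

theorem stmt_6 (F : Type*) [Field F] [LinearOrder F] [IsStrictOrderedRing F] (n : ℕ)
    (A B : Matrix (Fin n) (Fin n) F) (h : ArchSim A B) :
    ∀ C : Matrix (Fin n) (Fin n) F, ArchSim (A * C) (B * C) := by
  intro C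
  obtain ⟨r, h1, h2⟩ := h
  have conj : ∀ M : Matrix (Fin n) (Fin n) F, PSD M → PSD (Cᵀ * M * C) := by
    intro M hM v
    have := hM (C.mulVec v)
    simpa [dotProduct_mulVec, ← Matrix.vecMul_vecMul, Matrix.vecMul_transpose]
      using this
  have key : ∀ X Y : Matrix (Fin n) (Fin n) F,
      (r : F) • ((X*C)ᵀ * (X*C)) - (Y*C)ᵀ * (Y*C)
        = Cᵀ * ((r : F) • (Xᵀ * X) - Yᵀ * Y) * C := by
    intro X Y
    simp only [transpose_mul, Matrix.mul_sub, Matrix.sub_mul, Matrix.mul_smul,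
      Matrix.smul_mul, Matrix.mul_assoc]
  exact ⟨r, by rw [key]; exact conj _ h1, by rw [key]; exact conj _ h2⟩
end

section
/- Let F be a linearly ordered field and A, B ∈ Sₙ⁺(F) positive semidefinite with A ≤ B (B − A positive semidefinite). If A is invertible, then B is invertible, A⁻¹ and B⁻¹ are positive semidefinite, and B⁻¹ ≤ A⁻¹. -/
open Matrix

lemma symm_swap {F : Type*} [Field F] [LinearOrder F] [IsStrictOrderedRing F] {n : ℕ} {A : Matrix (Fin n) (Fin n) F}
    (hAs : A.IsSymm) (x y : Fin n → F) : x ⬝ᵥ A.mulVec y = y ⬝ᵥ A.mulVec x := by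
  rw [dotProduct_mulVec, ← vecMul_transpose, hAs, dotProduct_comm]

theorem stmt_7 (F : Type*) [Field F] [LinearOrder F] [IsStrictOrderedRing F] (n : ℕ)
    (A B : Matrix (Fin n) (Fin n) F)
    (hAs : A.IsSymm) (hBs : B.IsSymm) (hA : PSD A) (hB : PSD B)
    (hle : PSD (B - A)) (hinv : IsUnit A) :
    IsUnit B ∧ PSD A⁻¹ ∧ PSD B⁻¹ ∧ PSD (A⁻¹ - B⁻¹) := by
  have hAinv : A⁻¹ * A = 1 := nonsing_inv_mul A (isUnit_iff_isUnit_det A |>.mp hinv)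
  have hAinv' : A * A⁻¹ = 1 := mul_nonsing_inv A (isUnit_iff_isUnit_det A |>.mp hinv)
  -- positive definiteness of A
  have hApd : ∀ v : Fin n → F, v ≠ 0 → 0 < v ⬝ᵥ A.mulVec v := by
    intro v hv
    rcases lt_or_eq_of_le (hA v) with h | h
    · exact h
    exfalso
    apply hv
    have key : ∀ w : Fin n → F, v ⬝ᵥ A.mulVec w = 0 := by
      intro w
      by_contra hne
      set c := v ⬝ᵥ A.mulVec w with hc
      set d := w ⬝ᵥ A.mulVec w with hd
      set t := -(d + 1) / (2 * c) with ht
      have h0 := hA (t • v + w)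
      have hexp : (t • v + w) ⬝ᵥ A.mulVec (t • v + w)
          = t * t * (v ⬝ᵥ A.mulVec v) + 2 * t * c + d := by
        simp only [mulVec_add, mulVec_smul, add_dotProduct, dotProduct_add,
          smul_dotProduct, dotProduct_smul, smul_eq_mul]
        rw [symm_swap hAs w v]
        simp only [← hc, ← hd]; ring
      rw [hexp, ← h] at h0
      have h2c : (2 : F) * c ≠ 0 := by
        simp [hne]
      have htc : 2 * t * c = -(d + 1) := by
        rw [ht]; field_simp
      nlinarith [h0, htc]
    have hAv : A.mulVec v = 0 := by
      ext i
      have := key (Pi.single i 1)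
      rw [symm_swap hAs] at this
      simpa using this
    calc v = (A⁻¹ * A).mulVec v := by rw [hAinv, Matrix.one_mulVec]
      _ = A⁻¹.mulVec (A.mulVec v) := by rw [← mulVec_mulVec]
      _ = 0 := by rw [hAv, mulVec_zero]
  have hBpd : ∀ v : Fin n → F, v ≠ 0 → 0 < v ⬝ᵥ B.mulVec v := by
    intro v hv
    have h1 := hle v
    have h2 := hApd v hv
    rw [sub_mulVec, dotProduct_sub] at h1
    linarith
  have hBunit : IsUnit B := by
    rw [← Matrix.mulVec_injective_iff_isUnit]
    intro x y hxy
    by_contra hne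
    have hxy0 : B.mulVec (x - y) = 0 := by rw [mulVec_sub, hxy, sub_self]
    have := hBpd (x - y) (sub_ne_zero.mpr hne)
    rw [hxy0, dotProduct_zero] at this
    exact lt_irrefl 0 this
  have hBinv' : B * B⁻¹ = 1 := mul_nonsing_inv B (isUnit_iff_isUnit_det B |>.mp hBunit)
  -- inverse of PSD invertible matrix is PSD
  have hPSDinv : ∀ (M : Matrix (Fin n) (Fin n) F), PSD M → M * M⁻¹ = 1 → PSD M⁻¹ := by
    intro M hM hMinv v
    have hx : M.mulVec (M⁻¹.mulVec v) = v := by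
      rw [mulVec_mulVec, hMinv, Matrix.one_mulVec]
    calc (0:F) ≤ (M⁻¹.mulVec v) ⬝ᵥ M.mulVec (M⁻¹.mulVec v) := hM _
      _ = v ⬝ᵥ M⁻¹.mulVec v := by rw [hx, dotProduct_comm]
  refine ⟨hBunit, hPSDinv A hA hAinv', hPSDinv B hB hBinv', ?_⟩
  -- key inequality: 2 w⬝v − w⬝Aw ≤ v⬝A⁻¹v
  intro v
  set w := B⁻¹.mulVec v with hw
  set x := A⁻¹.mulVec v with hxdef
  have hAx : A.mulVec x = v := by
    rw [hxdef, mulVec_mulVec, hAinv', Matrix.one_mulVec]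
  have hBw : B.mulVec w = v := by
    rw [hw, mulVec_mulVec, hBinv', Matrix.one_mulVec]
  have hpos := hA (w - x)
  have hexp : (w - x) ⬝ᵥ A.mulVec (w - x)
      = w ⬝ᵥ A.mulVec w - 2 * (w ⬝ᵥ v) + v ⬝ᵥ x := by
    simp only [mulVec_sub, sub_dotProduct, dotProduct_sub]
    rw [symm_swap hAs x w, hAx, dotProduct_comm x v]
    ring
  have hle' := hle w
  rw [sub_mulVec, dotProduct_sub] at hle'
  have hwBw : w ⬝ᵥ B.mulVec w = w ⬝ᵥ v := by rw [hBw]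
  have hwv : w ⬝ᵥ v = v ⬝ᵥ B⁻¹.mulVec v := by rw [hw, dotProduct_comm]
  rw [sub_mulVec, dotProduct_sub, ← hxdef]
  -- goal: 0 ≤ v ⬝ᵥ x - v ⬝ᵥ B⁻¹.mulVec v
  nlinarith [hpos, hexp, hle', hwBw, hwv]
end

section
/- Let F be a linearly ordered field and A ∈ Sₙ⁺(F) a positive semidefinite matrix. Then there exists r ∈ ℕ with A ≤ r·Iₙ (A ⊒ Iₙ in the notation A ⊒ B iff A ≤ rB for some r ∈ ℕ) if and only if every diagonal entry of A is bounded, i.e., for each i there is r ∈ ℕ with aᵢᵢ ≤ r. -/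
open Matrix

theorem stmt_8 (F : Type*) [Field F] [LinearOrder F] [IsStrictOrderedRing F] (n : ℕ)
    (A : Matrix (Fin n) (Fin n) F) (hAs : A.IsSymm) (hA : PSD A) :
    (∃ r : ℕ, PSD ((r : F) • (1 : Matrix (Fin n) (Fin n) F) - A)) ↔
      ∀ i : Fin n, ∃ r : ℕ, A i i ≤ (r : F) := by
  have hdnn : ∀ i, 0 ≤ A i i := by
    intro i
    have h := hA (Pi.single i 1)
    simpa [Matrix.mulVec_single, single_dotProduct] using h
  constructor
  · rintro ⟨r, hr⟩ i
    refine ⟨r, ?_⟩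
    have h := hr (Pi.single i 1)
    simp [Matrix.sub_mulVec, Matrix.mulVec_single, dotProduct_sub,
      Matrix.smul_mulVec, Matrix.one_mulVec, dotProduct_single,
      single_dotProduct, Pi.single_apply] at h
    linarith
  · intro h
    choose f hf using h
    set r : ℕ := Finset.univ.sup f with hr
    have hdiag : ∀ i, A i i ≤ (r : F) := fun i =>
      (hf i).trans (by exact_mod_cast Nat.cast_le.mpr (Finset.le_sup (Finset.mem_univ i)))
    have hentry : ∀ i j, |A i j| ≤ (r : F) := by
      intro i j
      rcases eq_or_ne i j with rfl | hij
      · rw [abs_of_nonneg (hdnn i)]; exact hdiag i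
      · have key : ∀ ε : F, ε * ε = 1 → 0 ≤ A i i + A j j + ε * A i j + ε * A j i := by
          intro ε hε
          have h := hA (Pi.single i 1 + Pi.single j ε)
          simp [Matrix.mulVec_add, Matrix.mulVec_single, dotProduct_add,
            add_dotProduct, single_dotProduct, Pi.single_apply, hij, hij.symm] at h
          have e : ε * (A j j * ε) = A j j := by
            rw [mul_comm (A j j) ε, ← mul_assoc, hε, one_mul]
          rw [mul_add ε (A i j), ← mul_assoc ε ε, hε, one_mul] at h
          linarith [h, mul_comm (A i j) ε]
        have hsym : A j i = A i j := hAs.apply i j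
        have h1 := key 1 (by norm_num)
        have h2 := key (-1) (by norm_num)
        rw [hsym] at h1 h2
        have hij2 : |A i j| ≤ (A i i + A j j) / 2 := by
          rw [abs_le]; constructor <;> linarith
        have : (A i i + A j j) / 2 ≤ (r : F) := by
          have := hdiag i; have := hdiag j; linarith
        linarith
    refine ⟨r * n, ?_⟩
    intro v
    have key : v ⬝ᵥ A.mulVec v ≤ (r : F) * n * ∑ i, v i * v i := by
      calc v ⬝ᵥ A.mulVec v = ∑ i, ∑ j, v i * (A i j * v j) := by
            simp [dotProduct, Matrix.mulVec, Finset.mul_sum]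
        _ ≤ ∑ i, ∑ j, (r:F) * ((v i * v i + v j * v j)/2) := by
            apply Finset.sum_le_sum; intro i _
            apply Finset.sum_le_sum; intro j _
            have t1 : v i * (A i j * v j) ≤ |v i| * |A i j| * |v j| :=
              calc v i * (A i j * v j) ≤ |v i * (A i j * v j)| := le_abs_self _
              _ = |v i| * |A i j| * |v j| := by rw [abs_mul, abs_mul]; ring
            have t2 : |v i| * |A i j| * |v j| ≤ |v i| * (r:F) * |v j| :=
              mul_le_mul_of_nonneg_right
                (mul_le_mul_of_nonneg_left (hentry i j) (abs_nonneg _)) (abs_nonneg _)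
            have h4 : |v i| * |v j| ≤ (v i * v i + v j * v j)/2 := by
              nlinarith [sq_nonneg (|v i| - |v j|), abs_mul_abs_self (v i), abs_mul_abs_self (v j)]
            have hr0 : (0:F) ≤ (r:F) := Nat.cast_nonneg r
            have t3 : |v i| * (r:F) * |v j| ≤ (r:F) * ((v i * v i + v j * v j)/2) := by
              calc (|v i| * (r:F) * |v j|) = (r:F) * ( |v i| * |v j| ) := by ring
              _ ≤ _ := mul_le_mul_of_nonneg_left h4 hr0
            linarith
        _ = (r:F) * n * ∑ i, v i * v i := by
            have inner : ∀ i : Fin n, ∑ j : Fin n, (r:F) * ((v i * v i + v j * v j) / 2)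
                = (n:F) * ((r:F)/2 * (v i * v i)) + (r:F)/2 * ∑ j, v j * v j := by
              intro i
              calc ∑ j : Fin n, (r:F) * ((v i * v i + v j * v j) / 2)
                  = ∑ j : Fin n, ((r:F)/2 * (v i * v i) + (r:F)/2 * (v j * v j)) :=
                    Finset.sum_congr rfl (fun j _ => by ring)
                _ = _ := by
                    rw [Finset.sum_add_distrib, Finset.sum_const, ← Finset.mul_sum]
                    simp [Finset.card_univ, nsmul_eq_mul]
            calc ∑ i : Fin n, ∑ j : Fin n, (r:F) * ((v i * v i + v j * v j) / 2)
                = ∑ i : Fin n, ((n:F) * ((r:F)/2 * (v i * v i)) + (r:F)/2 * ∑ j, v j * v j) :=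
                  Finset.sum_congr rfl (fun i _ => inner i)
              _ = (r:F) * n * ∑ i, v i * v i := by
                  rw [Finset.sum_add_distrib, Finset.sum_const, ← Finset.mul_sum, ← Finset.mul_sum]
                  simp [Finset.card_univ, nsmul_eq_mul]
                  ring
    have hv : v ⬝ᵥ ((↑(r * n) : F) • (1 : Matrix (Fin n) (Fin n) F) - A).mulVec v
        = (↑(r * n) : F) * (∑ i, v i * v i) - v ⬝ᵥ A.mulVec v := by
      simp [Matrix.sub_mulVec, dotProduct_sub, Matrix.smul_mulVec,
        Matrix.one_mulVec, dotProduct, Finset.mul_sum]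
      rw [← Finset.sum_sub_distrib]
      exact Finset.sum_congr rfl fun x _ => by ring
    rw [hv]
    push_cast
    linarith
end

section
/- Let F be a linearly ordered field and A ∈ Sₙ⁺(F) positive semidefinite. If all diagonal entries of A are bounded (by a natural number) and det A is bibounded (i.e., there exist r, s ∈ ℕ, s ≥ 1 with 1/s ≤ det A ≤ r), then A is invertible and there exist r, s ∈ ℕ with (1/s)·Iₙ ≤ A ≤ r·Iₙ in the positive semidefinite order. -/
open Matrix

section aux
variable {F : Type*} [Field F] [LinearOrder F] [IsStrictOrderedRing F] {n : ℕ}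

lemma dot_symm (A : Matrix (Fin n) (Fin n) F) (hAs : A.IsSymm) (v w : Fin n → F) :
    v ⬝ᵥ A.mulVec w = w ⬝ᵥ A.mulVec v := by
  calc v ⬝ᵥ A.mulVec w = (v ᵥ* A) ⬝ᵥ w := by rw [Matrix.dotProduct_mulVec]
    _ = (Aᵀ *ᵥ v) ⬝ᵥ w := by rw [Matrix.mulVec_transpose]
    _ = (A *ᵥ v) ⬝ᵥ w := by rw [hAs]
    _ = w ⬝ᵥ A.mulVec v := dotProduct_comm _ _

lemma cs (A : Matrix (Fin n) (Fin n) F) (hAs : A.IsSymm) (hA : PSD A) (v w : Fin n → F) :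
    (v ⬝ᵥ A.mulVec w) * (v ⬝ᵥ A.mulVec w) ≤ (v ⬝ᵥ A.mulVec v) * (w ⬝ᵥ A.mulVec w) := by
  have key : ∀ x : F, 0 ≤ (v ⬝ᵥ A.mulVec v) * (x * x) + (2 * (v ⬝ᵥ A.mulVec w)) * x
      + (w ⬝ᵥ A.mulVec w) := by
    intro x
    have h := hA (w + x • v)
    simp only [Matrix.mulVec_add, Matrix.mulVec_smul, dotProduct_add,
      add_dotProduct, smul_dotProduct, dotProduct_smul,
      smul_eq_mul] at h
    rw [dot_symm A hAs w v] at h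
    nlinarith [h]
  have hd := discrim_le_zero key
  rw [discrim] at hd
  nlinarith [hd]

lemma qf_bound (B : Matrix (Fin n) (Fin n) F) (c : F) (hc : 0 ≤ c)
    (hB : ∀ i j, |B i j| ≤ c) (v : Fin n → F) :
    |v ⬝ᵥ B.mulVec v| ≤ c * n * (v ⬝ᵥ v) := by
  have h1 : |v ⬝ᵥ B.mulVec v| ≤ c * (∑ i, |v i|) ^ 2 := by
    calc |v ⬝ᵥ B.mulVec v| = |∑ i, v i * ∑ j, B i j * v j| := by
          simp [dotProduct, Matrix.mulVec]
      _ ≤ ∑ i, |v i * ∑ j, B i j * v j| := Finset.abs_sum_le_sum_abs _ _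
      _ ≤ ∑ i, |v i| * (c * ∑ j, |v j|) := by
          apply Finset.sum_le_sum
          intro i _
          rw [abs_mul]
          apply mul_le_mul_of_nonneg_left _ (abs_nonneg _)
          calc |∑ j, B i j * v j| ≤ ∑ j, |B i j * v j| := Finset.abs_sum_le_sum_abs _ _
            _ ≤ ∑ j, c * |v j| := by
                apply Finset.sum_le_sum
                intro j _
                rw [abs_mul]
                exact mul_le_mul_of_nonneg_right (hB i j) (abs_nonneg _)
            _ = c * ∑ j, |v j| := by rw [Finset.mul_sum]
      _ = c * (∑ i, |v i|) ^ 2 := by rw [← Finset.sum_mul]; ring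
  have h2 : (∑ i, |v i|) ^ 2 ≤ (n : F) * (v ⬝ᵥ v) := by
    have := sq_sum_le_card_mul_sum_sq (s := (Finset.univ : Finset (Fin n))) (f := fun i => |v i|)
    simpa [dotProduct, sq_abs, sq, Finset.card_univ] using this
  calc |v ⬝ᵥ B.mulVec v| ≤ c * ((n : F) * (v ⬝ᵥ v)) :=
        le_trans h1 (mul_le_mul_of_nonneg_left h2 hc)
    _ = c * n * (v ⬝ᵥ v) := by ring

lemma det_bound (B : Matrix (Fin n) (Fin n) F) (c : F)
    (hB : ∀ i j, |B i j| ≤ c) : |B.det| ≤ (n.factorial : F) * c ^ n := by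
  rw [Matrix.det_apply]
  calc |∑ σ : Equiv.Perm (Fin n), Equiv.Perm.sign σ • ∏ i, B (σ i) i|
      ≤ ∑ σ : Equiv.Perm (Fin n), |Equiv.Perm.sign σ • ∏ i, B (σ i) i| :=
        Finset.abs_sum_le_sum_abs _ _
    _ ≤ ∑ _σ : Equiv.Perm (Fin n), c ^ n := by
        apply Finset.sum_le_sum
        intro σ _
        have habs : |Equiv.Perm.sign σ • ∏ i, B (σ i) i| = |∏ i, B (σ i) i| := by
          rcases Int.units_eq_one_or (Equiv.Perm.sign σ) with h | h <;> simp [h, Units.smul_def]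
        rw [habs, Finset.abs_prod]
        calc ∏ i, |B (σ i) i| ≤ ∏ _i : Fin n, c :=
              Finset.prod_le_prod (fun i _ => abs_nonneg _) (fun i _ => hB _ _)
          _ = c ^ n := by simp
    _ = (n.factorial : F) * c ^ n := by
        simp [Finset.sum_const, Finset.card_univ, Fintype.card_perm, nsmul_eq_mul]

lemma dot_self_nonneg (v : Fin n → F) : 0 ≤ v ⬝ᵥ v :=
  Finset.sum_nonneg fun i _ => mul_self_nonneg (v i)

end aux

set_option maxHeartbeats 1000000 in
theorem stmt_9 (F : Type*) [Field F] [LinearOrder F] [IsStrictOrderedRing F] (n : ℕ)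
    (A : Matrix (Fin n) (Fin n) F) (hAs : A.IsSymm) (hA : PSD A)
    (hdiag : ∀ i : Fin n, ∃ r : ℕ, A i i ≤ (r : F))
    (hdet : ∃ r s : ℕ, 1 ≤ s ∧ 1 / (s : F) ≤ A.det ∧ A.det ≤ (r : F)) :
    IsUnit A ∧ ∃ r s : ℕ, 1 ≤ s ∧
      PSD (A - (1 / (s : F)) • (1 : Matrix (Fin n) (Fin n) F)) ∧
      PSD ((r : F) • (1 : Matrix (Fin n) (Fin n) F) - A) := by
  obtain ⟨r₀, s₀, hs₀, hlo, hhi⟩ := hdet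
  -- basic facts about determinant
  have hs₀F : (1 : F) ≤ (s₀ : F) := by exact_mod_cast hs₀
  have hs₀pos : (0 : F) < (s₀ : F) := lt_of_lt_of_le one_pos hs₀F
  have hdetpos : 0 < A.det := lt_of_lt_of_le (by positivity) hlo
  have hdetunit : IsUnit A.det := isUnit_iff_ne_zero.mpr (ne_of_gt hdetpos)
  have hunit : IsUnit A := (Matrix.isUnit_iff_isUnit_det A).mpr hdetunit
  refine ⟨hunit, ?_⟩
  -- uniform bound on entries of A
  choose rb hrb using hdiag
  set c₀ : ℕ := (Finset.univ.sup rb) + 1 with hc₀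
  have hc₀1 : (1 : F) ≤ (c₀ : F) := by exact_mod_cast Nat.one_le_iff_ne_zero.mpr (by simp [hc₀])
  have hc₀0 : (0 : F) ≤ (c₀ : F) := le_trans zero_le_one hc₀1
  have hdiagb : ∀ i, A i i ≤ (c₀ : F) := by
    intro i
    refine le_trans (hrb i) ?_
    have : rb i ≤ c₀ := le_trans (Finset.le_sup (Finset.mem_univ i)) (Nat.le_succ _)
    exact_mod_cast this
  have hdiag0 : ∀ i, 0 ≤ A i i := by
    intro i
    have := hA (Pi.single i 1)
    simpa [Matrix.mulVec_single, single_dotProduct] using this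
  have hentry : ∀ i j, |A i j| ≤ (c₀ : F) := by
    intro i j
    have hcs := cs A hAs hA (Pi.single i 1) (Pi.single j 1)
    simp only [Matrix.mulVec_single, single_dotProduct, one_mul, mul_one, MulOpposite.op_one, one_smul, Matrix.col_apply] at hcs
    have h1 : A i i * A j j ≤ (c₀ : F) * (c₀ : F) :=
      mul_le_mul (hdiagb i) (hdiagb j) (hdiag0 j) hc₀0
    have hsq : A i j * A i j ≤ (c₀ : F) * (c₀ : F) := le_trans hcs h1
    rw [abs_le]
    constructor <;> nlinarith [hsq, hc₀0]
  -- bound on entries of the adjugate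
  set K : ℕ := n.factorial * c₀ ^ n with hK
  have hadj : ∀ i j, |A.adjugate i j| ≤ (K : F) := by
    intro i j
    rw [Matrix.adjugate_apply]
    have hb : ∀ k l, |(A.updateRow j (Pi.single i 1)) k l| ≤ (c₀ : F) := by
      intro k l
      rw [Matrix.updateRow_apply]
      split
      · rcases eq_or_ne l i with h | h
        · subst h; rw [Pi.single_eq_same, abs_one]; exact hc₀1
        · rw [Pi.single_eq_of_ne h, abs_zero]; exact le_trans zero_le_one hc₀1
      · exact hentry k l
    have := det_bound _ _ hb
    calc |(A.updateRow j (Pi.single i 1)).det| ≤ (n.factorial : F) * (c₀ : F) ^ n := this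
      _ = (K : F) := by push_cast [hK]; ring
  -- choose the constants
  refine ⟨n * c₀, s₀ * (n * K) + 1, Nat.le_add_left 1 _, ?_, ?_⟩
  · -- lower bound
    set M : ℕ := s₀ * (n * K) with hM
    intro v
    have hvv : 0 ≤ v ⬝ᵥ v := dot_self_nonneg v
    have hAvv : 0 ≤ v ⬝ᵥ A.mulVec v := hA v
    -- w = A⁻¹ v
    set w : Fin n → F := A⁻¹.mulVec v with hw
    have hAw : A.mulVec w = v := by
      rw [hw, Matrix.mulVec_mulVec, Matrix.mul_nonsing_inv A hdetunit, Matrix.one_mulVec]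
    have hwAw : w ⬝ᵥ A.mulVec w = w ⬝ᵥ v := by rw [hAw]
    have hwAw0 : 0 ≤ w ⬝ᵥ v := by rw [← hwAw]; exact hA w
    -- bound on w ⬝ᵥ v
    have hinv : A⁻¹.mulVec v ⬝ᵥ v = A.det⁻¹ * (A.adjugate.mulVec v ⬝ᵥ v) := by
      rw [Matrix.inv_def, Ring.inverse_eq_inv', Matrix.smul_mulVec,
        smul_dotProduct, smul_eq_mul]
    have hdetinv : A.det⁻¹ ≤ (s₀ : F) := by
      have h := inv_anti₀ (show (0:F) < 1 / (s₀ : F) by positivity) hlo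
      simpa using h
    have hadjqf : |v ⬝ᵥ A.adjugate.mulVec v| ≤ (K : F) * n * (v ⬝ᵥ v) :=
      qf_bound A.adjugate (K : F) (by positivity) hadj v
    have hwAw0 : 0 ≤ w ⬝ᵥ v := by
      have h := hA w
      rw [hAw] at h
      exact h
    have hadjpos : 0 ≤ A.adjugate.mulVec v ⬝ᵥ v := by
      have h := hwAw0
      rw [hw, hinv] at h
      nlinarith [h, inv_pos.mpr hdetpos]
    have hwv : w ⬝ᵥ v ≤ (M : F) * (v ⬝ᵥ v) := by
      rw [hw, hinv]
      have h1 : A.adjugate.mulVec v ⬝ᵥ v ≤ (K : F) * n * (v ⬝ᵥ v) := by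
        rw [dotProduct_comm]
        exact le_trans (le_abs_self _) hadjqf
      calc A.det⁻¹ * (A.adjugate.mulVec v ⬝ᵥ v)
          ≤ (s₀ : F) * ((K : F) * n * (v ⬝ᵥ v)) :=
            mul_le_mul hdetinv h1 hadjpos (le_of_lt hs₀pos)
        _ = (M : F) * (v ⬝ᵥ v) := by push_cast [hM]; ring
    have hcs := cs A hAs hA v w
    rw [hAw] at hcs
    have key : (v ⬝ᵥ v) * (v ⬝ᵥ v) ≤ (v ⬝ᵥ A.mulVec v) * ((M : F) * (v ⬝ᵥ v)) :=
      le_trans hcs (mul_le_mul_of_nonneg_left hwv hAvv)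
    have hdq : v ⬝ᵥ v ≤ ((M : F) + 1) * (v ⬝ᵥ A.mulVec v) := by
      rcases eq_or_lt_of_le hvv with h | h
      · rw [← h]
        have : (0:F) ≤ (M : F) + 1 := by positivity
        exact mul_nonneg this hAvv
      · nlinarith [key, hAvv, h]
    simp only [Matrix.sub_mulVec, Matrix.smul_mulVec, Matrix.one_mulVec,
      dotProduct_sub, dotProduct_smul, smul_eq_mul]
    have hMcast : ((s₀ * (n * K) + 1 : ℕ) : F) = (M : F) + 1 := by push_cast [hM]; ring
    rw [hMcast]
    have hM1 : (0:F) < (M : F) + 1 := by positivity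
    have h2 : (1 / ((M : F) + 1)) * (((M : F) + 1) * (v ⬝ᵥ A.mulVec v)) = v ⬝ᵥ A.mulVec v := by
      field_simp
    have h3 := mul_le_mul_of_nonneg_left hdq (le_of_lt (one_div_pos.mpr hM1))
    rw [h2] at h3
    linarith
  · -- upper bound
    intro v
    have hvv : 0 ≤ v ⬝ᵥ v := dot_self_nonneg v
    have hqf := qf_bound A (c₀ : F) hc₀0 hentry v
    have h1 : v ⬝ᵥ A.mulVec v ≤ (c₀ : F) * n * (v ⬝ᵥ v) := le_trans (le_abs_self _) hqf
    simp only [Matrix.sub_mulVec, Matrix.smul_mulVec, Matrix.one_mulVec,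
      dotProduct_sub, dotProduct_smul, smul_eq_mul]
    have hcast : ((n * c₀ : ℕ) : F) = (n : F) * (c₀ : F) := by push_cast; ring
    rw [hcast]
    nlinarith [h1, hvv]
end

section
/- Let F be a linearly ordered field and A ∈ Sₙ⁺(F) positive semidefinite with s·Iₙ ≤ A for some natural number s ≥ 1 (in the Loewner order). Then (det A)⁻¹ exists and (det A)⁻¹ ≤ s⁻ⁿ, i.e., det A ≥ sⁿ. -/
open Matrix

set_option maxHeartbeats 1000000 in
lemma key_det_lower {F : Type*} [Field F] [LinearOrder F] [IsStrictOrderedRing F] (s : F) (hs : 0 < s) :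
    ∀ (n : ℕ) (A : Matrix (Fin n) (Fin n) F), A.IsSymm →
      (∀ v : Fin n → F, s * (v ⬝ᵥ v) ≤ v ⬝ᵥ A.mulVec v) → s ^ n ≤ A.det := by
  intro n
  induction n with
  | zero =>
    intro A _ _
    simp [Matrix.det_fin_zero]
  | succ n ih =>
    intro A hAsym hform
    letI : StarRing F := starRingOfComm
    have hstar : ∀ x : F, star x = x := fun _ => rfl
    set e : Fin n ⊕ Fin 1 ≃ Fin (n + 1) := finSumFinEquiv with he
    set M : Matrix (Fin n ⊕ Fin 1) (Fin n ⊕ Fin 1) F := A.submatrix e e with hM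
    have hMsym : M.IsSymm := hAsym.submatrix e
    set P := M.toBlocks₁₁ with hP
    set B := M.toBlocks₁₂ with hB
    set D := M.toBlocks₂₂ with hD
    have hMblocks : M = fromBlocks P B Bᴴ D := by
      ext i j
      cases i with
      | inl i => cases j with
        | inl j => rfl
        | inr j => rfl
      | inr i => cases j with
        | inl j =>
          show M _ _ = star (M (Sum.inl j) (Sum.inr i))
          rw [hstar]
          exact (hMsym.apply _ _).symm
        | inr j => rfl
    have hDH : D.IsHermitian := by
      ext i j
      fin_cases i; fin_cases j
      exact hstar _
    set d := D 0 0 with hd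
    -- s ≤ d
    have hsd : s ≤ d := by
      have := hform (Pi.single (e (Sum.inr 0)) 1)
      exact (by simpa [Matrix.mulVec, dotProduct, Pi.single_apply] using this : s ≤ A (e (Sum.inr 0)) (e (Sum.inr 0)))
    have hd0 : 0 < d := hs.trans_le hsd
    have hdet1 : D.det = d := by rw [Matrix.det_fin_one]
    haveI : Invertible D.det := invertibleOfNonzero (by rw [hdet1]; exact hd0.ne')
    haveI : Invertible D := D.invertibleOfDetInvertible
    set S := P - B * D⁻¹ * Bᴴ with hS
    -- quadratic form bound on S
    have hquad : ∀ x : Fin n → F, s * (x ⬝ᵥ x) ≤ x ⬝ᵥ S.mulVec x := by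
      intro x
      set y : Fin 1 → F := -((D⁻¹ * Bᴴ) *ᵥ x) with hy
      have h1 := schur_complement_eq₂₂ P B x y (hD := hDH)
      rw [← hMblocks] at h1
      have hzero : (D⁻¹ * Bᴴ) *ᵥ x + y = 0 := by rw [hy]; exact add_neg_cancel _
      rw [hzero] at h1
      have hstarv : ∀ (k : ℕ) (v : Fin k → F), star v = v := by
        intro k v; funext i; exact hstar _
      rw [hstarv, hstarv] at h1
      simp only [Matrix.zero_vecMul, zero_dotProduct, zero_add] at h1
      -- relate to A's form
      set w : Fin (n + 1) → F := Sum.elim x y ∘ e.symm with hw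
      have hu : Sum.elim x y = w ∘ e := by
        funext i; simp [hw]
      have hMw : (Sum.elim x y) ᵥ* M ⬝ᵥ (Sum.elim x y) = w ⬝ᵥ A.mulVec w := by
        rw [← Matrix.dotProduct_mulVec, hM, Matrix.submatrix_mulVec_equiv, hu]
        have h3 : (w ∘ ⇑e) ∘ ⇑e.symm = w := by
          funext i; simp
        rw [h3]
        exact comp_equiv_dotProduct_comp_equiv (x := w) (y := A *ᵥ w) e
      have hxw : x ⬝ᵥ x ≤ w ⬝ᵥ w := by
        have h4 : w ⬝ᵥ w = Sum.elim x y ⬝ᵥ Sum.elim x y := by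
          rw [hu]; exact (comp_equiv_dotProduct_comp_equiv (x := w) (y := w) e).symm
        rw [h4, sumElim_dotProduct_sumElim]
        have : 0 ≤ y ⬝ᵥ y := by
          apply Finset.sum_nonneg
          intro i _
          exact mul_self_nonneg _
        linarith
      calc s * (x ⬝ᵥ x) ≤ s * (w ⬝ᵥ w) := by
            apply mul_le_mul_of_nonneg_left hxw hs.le
        _ ≤ w ⬝ᵥ A.mulVec w := hform w
        _ = (Sum.elim x y) ᵥ* M ⬝ᵥ (Sum.elim x y) := hMw.symm
        _ = x ᵥ* S ⬝ᵥ x := h1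
        _ = x ⬝ᵥ S.mulVec x := (Matrix.dotProduct_mulVec _ _ _).symm
    -- S is symmetric
    have hSsym : S.IsSymm := by
      have hMH : M.IsHermitian := by
        ext i j
        rw [conjTranspose_apply, hstar]
        exact hMsym.apply _ _
      have := (Matrix.IsHermitian.fromBlocks₂₂ P B hDH).mp (hMblocks ▸ hMH)
      ext i j
      have := congrFun (congrFun this.eq i) j
      rwa [conjTranspose_apply, hstar] at this
    have hSdet := ih S hSsym hquad
    -- determinant identity
    have hdetA : A.det = d * S.det := by
      have h2 : M.det = A.det := Matrix.det_submatrix_equiv_self e A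
      rw [← h2, hMblocks, Matrix.det_fromBlocks₂₂, invOf_eq_nonsing_inv, hdet1, ← hS]
    rw [hdetA, pow_succ, mul_comm (s ^ n) s]
    exact mul_le_mul hsd hSdet (pow_pos hs n).le hd0.le

theorem stmt_10 (F : Type*) [Field F] [LinearOrder F] [IsStrictOrderedRing F] (n : ℕ)
    (A : Matrix (Fin n) (Fin n) F) (hAs : A.IsSymm) (hA : PSD A)
    (s : ℕ) (hs : 1 ≤ s)
    (hle : PSD (A - (s : F) • (1 : Matrix (Fin n) (Fin n) F))) :
    A.det ≠ 0 ∧ (s : F) ^ n ≤ A.det := by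
  have hs' : (0 : F) < (s : F) := by
    exact_mod_cast Nat.lt_of_lt_of_le Nat.zero_lt_one hs
  have hform : ∀ v : Fin n → F, (s : F) * (v ⬝ᵥ v) ≤ v ⬝ᵥ A.mulVec v := by
    intro v
    have h := hle v
    rw [Matrix.sub_mulVec, dotProduct_sub, Matrix.smul_mulVec,
      Matrix.one_mulVec, dotProduct_smul] at h
    rw [smul_eq_mul] at h
    linarith
  have hkey := key_det_lower (s : F) hs' n A hAs hform
  exact ⟨((pow_pos hs' n).trans_le hkey).ne', hkey⟩
end

section
/- Let F be a linearly ordered field, A ∈ M_{k,n}(F), B ∈ M_{l,n}(F). Then A ⪰ B (∃ r ∈ ℕ with AᵀA ≤ r·BᵀB in the Loewner order on n×n symmetric matrices) if and only if there exists a bounded matrix C ∈ M_{k,l}(F) (i.e., ∃ r ∈ ℕ, CᵀC ≤ r·I_l) with A = C·B. -/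
open Matrix

section aux

variable {F : Type*} [Field F] [LinearOrder F] [IsStrictOrderedRing F]

/-- The dot product as a bilinear form on `Fin m → F`. -/
def dotForm (F : Type*) [Field F] [LinearOrder F] [IsStrictOrderedRing F] (m : ℕ) :
    LinearMap.BilinForm F (Fin m → F) :=
  LinearMap.mk₂ F (fun x y => x ⬝ᵥ y)
    (fun x x' y => add_dotProduct x x' y)
    (fun c x y => smul_dotProduct c x y)
    (fun x y y' => dotProduct_add x y y')
    (fun c x y => dotProduct_smul c x y)

@[simp] lemma dotForm_apply {m : ℕ} (x y : Fin m → F) : dotForm F m x y = x ⬝ᵥ y := rfl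

lemma dotForm_isRefl (m : ℕ) : (dotForm F m).IsRefl := by
  intro x y h
  simpa [dotProduct_comm] using h

lemma dp_self_nonneg {m : ℕ} (v : Fin m → F) : (0:F) ≤ v ⬝ᵥ v :=
  Finset.sum_nonneg fun _ _ => mul_self_nonneg _

lemma expand_aux {m p : ℕ} (M : Matrix (Fin m) (Fin p) F) (s : F)
    (N : Matrix (Fin p) (Fin p) F) (v : Fin p → F) :
    v ⬝ᵥ ((s • N - Mᵀ * M) *ᵥ v) = s * (v ⬝ᵥ N *ᵥ v) - (M *ᵥ v) ⬝ᵥ (M *ᵥ v) := by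
  rw [sub_mulVec, dotProduct_sub, smul_mulVec, dotProduct_smul, smul_eq_mul,
    ← Matrix.mulVec_mulVec, dotProduct_mulVec v Mᵀ, vecMul_transpose]

end aux

theorem stmt_13 (F : Type*) [Field F] [LinearOrder F] [IsStrictOrderedRing F] (k l n : ℕ)
    (A : Matrix (Fin k) (Fin n) F) (B : Matrix (Fin l) (Fin n) F) :
    (∃ r : ℕ, PSD ((r : F) • (Bᵀ * B) - Aᵀ * A)) ↔
      ∃ C : Matrix (Fin k) (Fin l) F,
        (∃ r : ℕ, PSD ((r : F) • (1 : Matrix (Fin l) (Fin l) F) - Cᵀ * C)) ∧ A = C * B := by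
  constructor
  · rintro ⟨r, hr⟩
    -- the key inequality
    have hkey : ∀ v : Fin n → F,
        (A *ᵥ v) ⬝ᵥ (A *ᵥ v) ≤ (r : F) * ((B *ᵥ v) ⬝ᵥ (B *ᵥ v)) := by
      intro v
      have := hr v
      rw [expand_aux, ← Matrix.mulVec_mulVec, dotProduct_mulVec v Bᵀ, vecMul_transpose] at this
      linarith
    set b := B.mulVecLin with hb
    set a := A.mulVecLin with ha
    have hker : LinearMap.ker b ≤ LinearMap.ker a := by
      intro v hv
      rw [LinearMap.mem_ker] at hv ⊢
      have h1 := hkey v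
      have h2 : (0:F) ≤ (A *ᵥ v) ⬝ᵥ (A *ᵥ v) := dp_self_nonneg _
      have hBv : B *ᵥ v = 0 := hv
      rw [hBv] at h1
      simp only [dotProduct_zero, mul_zero] at h1
      have : (A *ᵥ v) ⬝ᵥ (A *ᵥ v) = 0 := le_antisymm h1 h2
      exact dotProduct_self_eq_zero.mp this
    set W := LinearMap.range b with hW
    -- the forced map on the range of b
    set D : W →ₗ[F] (Fin k → F) :=
      ((LinearMap.ker b).liftQ a hker) ∘ₗ (b.quotKerEquivRange.symm : W →ₗ[F] _) with hD
    have hDb : ∀ v : Fin n → F, D ⟨b v, LinearMap.mem_range_self b v⟩ = a v := by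
      intro v
      simp only [hD, LinearMap.coe_comp, Function.comp_apply, LinearEquiv.coe_coe]
      rw [b.quotKerEquivRange_symm_apply_image v]
      simp
    -- orthogonal complement setup
    have hrefl := dotForm_isRefl (F := F) l
    have hnd : ((dotForm F l).restrict W).Nondegenerate := by
      constructor
      all_goals
        intro x hx
        have := hx x
        simp only [LinearMap.BilinForm.restrict_apply, dotForm_apply] at this
        exact Subtype.ext (dotProduct_self_eq_zero.mp this)
    have hc : IsCompl W ((dotForm F l).orthogonal W) :=
      LinearMap.BilinForm.isCompl_orthogonal_of_restrict_nondegenerate hrefl hnd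
    set proj := Submodule.linearProjOfIsCompl W ((dotForm F l).orthogonal W) hc with hproj
    set c : (Fin l → F) →ₗ[F] (Fin k → F) := D ∘ₗ proj with hcdef
    refine ⟨LinearMap.toMatrix' c, ⟨r, ?_⟩, ?_⟩
    · -- boundedness
      intro u
      rw [expand_aux]
      have hCu : (LinearMap.toMatrix' c) *ᵥ u = c u := by
        rw [← Matrix.toLin'_apply, Matrix.toLin'_toMatrix']
      rw [hCu]
      set w : Fin l → F := (proj u : Fin l → F) with hw
      have hwmem : w ∈ W := (proj u).2
      obtain ⟨v, hv⟩ := hwmem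
      have hwmem' : w ∈ W := (proj u).2
      have hcu : c u = a v := by
        rw [hcdef]
        simp only [LinearMap.coe_comp, Function.comp_apply]
        have : proj u = ⟨b v, LinearMap.mem_range_self b v⟩ := Subtype.ext (by rw [← hw, ← hv])
        rw [this, hDb]
      -- orthogonality: u = w + w' with w' orthogonal to W
      have hw'mem : u - w ∈ (dotForm F l).orthogonal W := by
        have hsub : proj (u - w) = 0 := by
          simp [hw, map_sub, Submodule.linearProjOfIsCompl_apply_left hc]
          exact sub_eq_zero.mpr (Submodule.linearProjOfIsCompl_apply_left hc (proj u)).symm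
        exact (Submodule.linearProjOfIsCompl_apply_eq_zero_iff hc).mp hsub
      have horth : w ⬝ᵥ (u - w) = 0 := by
        have h0 := hw'mem w hwmem'
        exact h0
      have hineq : w ⬝ᵥ w ≤ u ⬝ᵥ u := by
        have hexp : u ⬝ᵥ u = w ⬝ᵥ w + 2 * (w ⬝ᵥ (u - w)) + (u - w) ⬝ᵥ (u - w) := by
          have : u = w + (u - w) := by ring_nf
          nth_rewrite 1 [this]; nth_rewrite 2 [this]
          rw [add_dotProduct, dotProduct_add, dotProduct_add, dotProduct_comm (u - w) w]
          ring
        have h2 : (0:F) ≤ (u - w) ⬝ᵥ (u - w) := dp_self_nonneg _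
        rw [hexp, horth]
        linarith
      have hbv : b v = B *ᵥ v := rfl
      have hav : a v = A *ᵥ v := rfl
      have h1 : (a v) ⬝ᵥ (a v) ≤ (r : F) * (w ⬝ᵥ w) := by
        rw [hav, ← hv, hbv]
        exact hkey v
      have h2 : (r : F) * (w ⬝ᵥ w) ≤ (r : F) * (u ⬝ᵥ u) :=
        mul_le_mul_of_nonneg_left hineq (Nat.cast_nonneg r)
      have hu1 : u ⬝ᵥ (1 : Matrix (Fin l) (Fin l) F) *ᵥ u = u ⬝ᵥ u := by rw [Matrix.one_mulVec]
      rw [hu1, hcu]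
      linarith
    · -- A = C * B
      apply Matrix.toLin'.injective
      rw [Matrix.toLin'_mul]
      apply LinearMap.ext
      intro v
      simp only [LinearMap.coe_comp, Function.comp_apply, Matrix.toLin'_apply]
      have hCu : (LinearMap.toMatrix' c) *ᵥ (B *ᵥ v) = c (B *ᵥ v) := by
        rw [← Matrix.toLin'_apply, Matrix.toLin'_toMatrix']
      rw [hCu]
      have : c (b v) = a v := by
        rw [hcdef]
        simp only [LinearMap.coe_comp, Function.comp_apply]
        have : proj (b v) = ⟨b v, LinearMap.mem_range_self b v⟩ :=
          Submodule.linearProjOfIsCompl_apply_left hc ⟨b v, LinearMap.mem_range_self b v⟩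
        rw [this, hDb]
      exact (this).symm
  · rintro ⟨C, ⟨r, hr⟩, hAB⟩
    refine ⟨r, ?_⟩
    intro v
    rw [expand_aux, ← Matrix.mulVec_mulVec, dotProduct_mulVec v Bᵀ, vecMul_transpose]
    have := hr (B *ᵥ v)
    rw [expand_aux, Matrix.one_mulVec] at this
    rw [hAB, ← Matrix.mulVec_mulVec]
    linarith
end

section
/- Let F be a linearly ordered field and A, B, C ∈ Sₙ⁺(F) positive semidefinite matrices. The parallel sum is A : B = A(A+B)⁺B where (A+B)⁺ is the Moore–Penrose inverse. If A ≤ B (Loewner order) then A : C ≤ B : C. -/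
open Matrix

/-- `P` is the Moore–Penrose inverse of `M` (Penrose conditions). -/
def IsMoorePenrose {F : Type*} [Field F] [LinearOrder F] [IsStrictOrderedRing F] {n : ℕ}
    (M P : Matrix (Fin n) (Fin n) F) : Prop :=
  M * P * M = M ∧ P * M * P = P ∧ (M * P)ᵀ = M * P ∧ (P * M)ᵀ = P * M

section aux

variable {F : Type*} [Field F] [LinearOrder F] [IsStrictOrderedRing F] {n : ℕ}

lemma symm_dot {M : Matrix (Fin n) (Fin n) F} (hM : M.IsSymm) (v w : Fin n → F) :
    v ⬝ᵥ M.mulVec w = M.mulVec v ⬝ᵥ w := by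
  rw [Matrix.dotProduct_mulVec, ← Matrix.mulVec_transpose, hM]

lemma mp_unique {M X Y : Matrix (Fin n) (Fin n) F}
    (hX : IsMoorePenrose M X) (hY : IsMoorePenrose M Y) : X = Y := by
  obtain ⟨hX1, hX2, hX3, hX4⟩ := hX
  obtain ⟨hY1, hY2, hY3, hY4⟩ := hY
  have hMX : M * X = M * Y := by
    calc M * X = (M * X)ᵀ := hX3.symm
    _ = Xᵀ * Mᵀ := by rw [Matrix.transpose_mul]
    _ = Xᵀ * (M * Y * M)ᵀ := by rw [hY1]
    _ = Xᵀ * (Mᵀ * (M * Y)ᵀ) := by rw [Matrix.transpose_mul]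
    _ = Xᵀ * Mᵀ * (M * Y) := by rw [hY3]; noncomm_ring
    _ = (M * X)ᵀ * (M * Y) := by rw [Matrix.transpose_mul]
    _ = M * X * (M * Y) := by rw [hX3]
    _ = M * X * M * Y := by noncomm_ring
    _ = M * Y := by rw [hX1]
  have hXM : X * M = Y * M := by
    calc X * M = (X * M)ᵀ := hX4.symm
    _ = Mᵀ * Xᵀ := by rw [Matrix.transpose_mul]
    _ = (M * Y * M)ᵀ * Xᵀ := by rw [hY1]
    _ = Mᵀ * Yᵀ * (Mᵀ * Xᵀ) := by rw [Matrix.transpose_mul, Matrix.transpose_mul]; noncomm_ring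
    _ = (Y * M)ᵀ * (X * M)ᵀ := by rw [Matrix.transpose_mul, Matrix.transpose_mul]
    _ = Y * M * (X * M) := by rw [hY4, hX4]
    _ = Y * (M * X * M) := by noncomm_ring
    _ = Y * M := by rw [hX1]
  calc X = X * M * X := hX2.symm
  _ = X * (M * Y) := by rw [← hMX]; noncomm_ring
  _ = (X * M) * Y := by noncomm_ring
  _ = Y * M * Y := by rw [hXM]
  _ = Y := hY2

lemma mp_symm {S P : Matrix (Fin n) (Fin n) F} (hS : S.IsSymm) (hP : IsMoorePenrose S P) :
    P.IsSymm := by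
  obtain ⟨h1, h2, h3, h4⟩ := hP
  have hPt : IsMoorePenrose S Pᵀ := by
    refine ⟨?_, ?_, ?_, ?_⟩
    · have := congrArg Matrix.transpose h1
      simpa [Matrix.transpose_mul, hS.eq, mul_assoc] using this
    · have := congrArg Matrix.transpose h2
      simpa [Matrix.transpose_mul, hS.eq, mul_assoc] using this
    · have e : S * Pᵀ = P * S := by
        conv_lhs => rw [← hS.eq]
        rw [← Matrix.transpose_mul, h4]
      rw [e]; exact h4
    · have e : Pᵀ * S = S * P := by
        conv_lhs => rw [← hS.eq]
        rw [← Matrix.transpose_mul, h3]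
      rw [e]; exact h3
  exact (mp_unique ⟨h1, h2, h3, h4⟩ hPt).symm

lemma quad_aux (a b : F) (hb : 0 ≤ b) (key : ∀ t : F, 0 ≤ 2 * t * a + t ^ 2 * b) :
    a = 0 := by
  set t : F := -(a / (b + 1)) with htdef
  have hd : (0 : F) < b + 1 := by linarith
  have ht : t * (b + 1) = -a := by rw [htdef]; field_simp
  have expand : (2 * t * a + t ^ 2 * b) * (b + 1) ^ 2
      = 2 * (t * (b + 1)) * a * (b + 1) + (t * (b + 1)) ^ 2 * b := by ring
  rw [ht] at expand
  have h2 : 0 ≤ 2 * (-a) * a * (b + 1) + (-a) ^ 2 * b := by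
    rw [← expand]; exact mul_nonneg (key t) (sq_nonneg _)
  have hle : a ^ 2 ≤ 0 := by nlinarith [sq_nonneg a]
  have : a ^ 2 = 0 := le_antisymm hle (sq_nonneg a)
  exact pow_eq_zero_iff two_ne_zero |>.mp this

lemma psd_mulVec_eq_zero {M : Matrix (Fin n) (Fin n) F} (hMs : M.IsSymm) (hM : PSD M)
    (w : Fin n → F) (h : w ⬝ᵥ M.mulVec w = 0) : M.mulVec w = 0 := by
  have inner : ∀ u : Fin n → F, u ⬝ᵥ M.mulVec w = 0 := by
    intro u
    apply quad_aux _ _ (hM u)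
    intro t
    have h0 := hM (w + t • u)
    have hwu : w ⬝ᵥ M.mulVec u = u ⬝ᵥ M.mulVec w := by
      rw [symm_dot hMs, dotProduct_comm]
    simp only [Matrix.mulVec_add, Matrix.mulVec_smul, dotProduct_add, add_dotProduct,
      dotProduct_smul, smul_dotProduct, smul_eq_mul] at h0
    rw [h, hwu] at h0
    nlinarith [h0]
  funext i
  have := inner (Pi.single i 1)
  simpa using this

lemma eq_zero_of_mulVec {M : Matrix (Fin n) (Fin n) F}
    (h : ∀ w : Fin n → F, M.mulVec w = 0) : M = 0 := by
  ext i j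
  have := congrFun (h (Pi.single j 1)) i
  simpa using this

lemma spc {A C P : Matrix (Fin n) (Fin n) F} (hAs : A.IsSymm) (hCs : C.IsSymm)
    (hA : PSD A) (hC : PSD C) (hP : IsMoorePenrose (A + C) P) :
    (A + C) * P * C = C := by
  have hSs : (A + C).IsSymm := hAs.add hCs
  have hPs : P.IsSymm := mp_symm hSs hP
  obtain ⟨h1, h2, h3, h4⟩ := hP
  have hker : ∀ w : Fin n → F, (A + C).mulVec w = 0 → C.mulVec w = 0 := by
    intro w hw
    have h0 : w ⬝ᵥ (A + C).mulVec w = 0 := by rw [hw]; simp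
    have hsplit : w ⬝ᵥ A.mulVec w + w ⬝ᵥ C.mulVec w = 0 := by
      rw [← dotProduct_add, ← Matrix.add_mulVec]; exact h0
    have hCw : w ⬝ᵥ C.mulVec w = 0 := le_antisymm (by nlinarith [hA w, hC w]) (hC w)
    exact psd_mulVec_eq_zero hCs hC w hCw
  have hz : C * (1 - P * (A + C)) = 0 := by
    apply eq_zero_of_mulVec
    intro w
    have hs : (A + C).mulVec ((1 - P * (A + C)).mulVec w) = 0 := by
      rw [Matrix.mulVec_mulVec, mul_sub, mul_one, ← mul_assoc, h1, sub_self]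
      simp
    rw [← Matrix.mulVec_mulVec]
    exact hker _ hs
  have hCPS : C * P * (A + C) = C := by
    rw [mul_sub, mul_one, ← mul_assoc] at hz
    have := sub_eq_zero.mp hz
    exact this.symm
  calc (A + C) * P * C = (C * P * (A + C))ᵀ := by
        rw [Matrix.transpose_mul, Matrix.transpose_mul, hSs.eq, hPs.eq, hCs.eq, mul_assoc]
  _ = Cᵀ := by rw [hCPS]
  _ = C := hCs.eq

lemma key_identity {A C P : Matrix (Fin n) (Fin n) F} (hAs : A.IsSymm) (hCs : C.IsSymm)
    (hSPC : (A + C) * P * C = C) (v x : Fin n → F) :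
    x ⬝ᵥ A.mulVec x + (v - x) ⬝ᵥ C.mulVec (v - x) - v ⬝ᵥ (A * P * C).mulVec v
    = (x - P.mulVec (C.mulVec v)) ⬝ᵥ (A + C).mulVec (x - P.mulVec (C.mulVec v)) := by
  have fAPC : A * P * C = C - C * P * C := by
    have h : A * P * C + C * P * C = C := by
      rw [← add_mul, ← add_mul]; exact hSPC
    exact eq_sub_of_add_eq h
  have f1 : A.mulVec (P.mulVec (C.mulVec v)) + C.mulVec (P.mulVec (C.mulVec v))
      = C.mulVec v := by
    rw [← Matrix.add_mulVec, Matrix.mulVec_mulVec, Matrix.mulVec_mulVec, hSPC]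
  have e1 : v ⬝ᵥ (A * P * C).mulVec v
      = v ⬝ᵥ C.mulVec v - (C.mulVec v) ⬝ᵥ (P.mulVec (C.mulVec v)) := by
    have h : (C.mulVec v) ⬝ᵥ (P.mulVec (C.mulVec v)) = v ⬝ᵥ (C * P * C).mulVec v := by
      rw [← symm_dot hCs, Matrix.mulVec_mulVec, Matrix.mulVec_mulVec]
    rw [fAPC, Matrix.sub_mulVec, dotProduct_sub, h]
  have e2 : x ⬝ᵥ A.mulVec (P.mulVec (C.mulVec v)) + x ⬝ᵥ C.mulVec (P.mulVec (C.mulVec v))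
      = x ⬝ᵥ C.mulVec v := by
    rw [← dotProduct_add, f1]
  have e3 : (P.mulVec (C.mulVec v)) ⬝ᵥ A.mulVec x
      = x ⬝ᵥ A.mulVec (P.mulVec (C.mulVec v)) := by
    rw [symm_dot hAs, dotProduct_comm]
  have e4 : (P.mulVec (C.mulVec v)) ⬝ᵥ C.mulVec x
      = x ⬝ᵥ C.mulVec (P.mulVec (C.mulVec v)) := by
    rw [symm_dot hCs, dotProduct_comm]
  have e5 : (P.mulVec (C.mulVec v)) ⬝ᵥ A.mulVec (P.mulVec (C.mulVec v))
      + (P.mulVec (C.mulVec v)) ⬝ᵥ C.mulVec (P.mulVec (C.mulVec v))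
      = (P.mulVec (C.mulVec v)) ⬝ᵥ C.mulVec v := by
    rw [← dotProduct_add, f1]
  have e6 : (P.mulVec (C.mulVec v)) ⬝ᵥ C.mulVec v
      = (C.mulVec v) ⬝ᵥ (P.mulVec (C.mulVec v)) := dotProduct_comm _ _
  have e7 : v ⬝ᵥ C.mulVec x = x ⬝ᵥ C.mulVec v := by
    rw [symm_dot hCs, dotProduct_comm]
  rw [e1]
  simp only [Matrix.mulVec_sub, Matrix.add_mulVec, dotProduct_sub, sub_dotProduct,
    dotProduct_add]
  linarith [e2, e3, e4, e5, e6, e7]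

end aux

theorem stmt_14 (F : Type*) [Field F] [LinearOrder F] [IsStrictOrderedRing F] (n : ℕ)
    (A B C : Matrix (Fin n) (Fin n) F)
    (hAs : A.IsSymm) (hBs : B.IsSymm) (hCs : C.IsSymm)
    (hA : PSD A) (hB : PSD B) (hC : PSD C)
    (P Q : Matrix (Fin n) (Fin n) F)
    (hP : IsMoorePenrose (A + C) P) (hQ : IsMoorePenrose (B + C) Q)
    (hle : PSD (B - A)) :
    PSD (B * Q * C - A * P * C) := by
  intro v
  have hSPC : (A + C) * P * C = C := spc hAs hCs hA hC hP
  have hTQC : (B + C) * Q * C = C := spc hBs hCs hB hC hQ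
  set x : Fin n → F := Q.mulVec (C.mulVec v) with hx
  have e1 := key_identity hBs hCs hTQC v x
  have e2 := key_identity hAs hCs hSPC v x
  -- the right side of e1 is zero
  rw [← hx, sub_self] at e1
  simp only [Matrix.mulVec_zero, dotProduct_zero] at e1
  -- the right side of e2 is nonnegative
  have hSpsd : 0 ≤ (x - P.mulVec (C.mulVec v)) ⬝ᵥ (A + C).mulVec (x - P.mulVec (C.mulVec v)) := by
    have h := hA (x - P.mulVec (C.mulVec v))
    have h' := hC (x - P.mulVec (C.mulVec v))
    rw [Matrix.add_mulVec, dotProduct_add]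
    linarith
  have h3 : x ⬝ᵥ A.mulVec x ≤ x ⬝ᵥ B.mulVec x := by
    have h := hle x
    rw [Matrix.sub_mulVec, dotProduct_sub] at h
    linarith
  rw [Matrix.sub_mulVec, dotProduct_sub]
  linarith [e1, e2, hSpsd, h3]
end

section
/- Let F be a linearly ordered field and A, B ∈ Sₙ⁺(F). With A ⊒ B meaning ∃ r ∈ ℕ, A ≤ r·B (Loewner order), and A : B = A(A+B)⁺B the parallel sum: A : B ⊒ A, A : B ⊒ B, and if C ∈ Sₙ⁺(F) satisfies C ⊒ A and C ⊒ B then C ⊒ A : B. Hence the class of A : B is the least upper bound of the classes of A and B. -/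
open Matrix

/-- `A ⊒ B` iff `A ≤ r·B` (Loewner) for some natural `r`. -/
def Sqsupseteq {F : Type*} [Field F] [LinearOrder F] [IsStrictOrderedRing F] {n : ℕ}
    (A B : Matrix (Fin n) (Fin n) F) : Prop :=
  ∃ r : ℕ, PSD ((r : F) • B - A)

section Aux

variable {F : Type*} [Field F] [LinearOrder F] [IsStrictOrderedRing F] {n : ℕ}

lemma aux_quad (R X : Matrix (Fin n) (Fin n) F) (v : Fin n → F) :
    v ⬝ᵥ (Rᵀ * X * R).mulVec v = (R.mulVec v) ⬝ᵥ X.mulVec (R.mulVec v) := by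
  rw [← Matrix.mulVec_mulVec, ← Matrix.mulVec_mulVec, Matrix.dotProduct_mulVec,
    Matrix.vecMul_transpose]

lemma aux_symm_dot {C : Matrix (Fin n) (Fin n) F} (hC : C.IsSymm) (u w : Fin n → F) :
    u ⬝ᵥ C.mulVec w = w ⬝ᵥ C.mulVec u := by
  rw [Matrix.dotProduct_mulVec, ← Matrix.vecMul_transpose, hC.eq, dotProduct_comm]

lemma aux_psd_kernel {A : Matrix (Fin n) (Fin n) F} (hAs : A.IsSymm) (hA : PSD A)
    {v : Fin n → F} (hv : v ⬝ᵥ A.mulVec v = 0) : A.mulVec v = 0 := by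
  have key : ∀ w : Fin n → F, w ⬝ᵥ A.mulVec v = 0 := by
    intro w
    by_contra hc
    have hd : 0 ≤ w ⬝ᵥ A.mulVec w := hA w
    have habs : ∀ t : F, 0 ≤ w ⬝ᵥ A.mulVec w + 2*t*(w ⬝ᵥ A.mulVec v) := by
      intro t
      have h0 := hA (w + t • v)
      have expand : (w + t • v) ⬝ᵥ A.mulVec (w + t • v)
          = w ⬝ᵥ A.mulVec w + 2*t*(w ⬝ᵥ A.mulVec v) := by
        rw [Matrix.mulVec_add, Matrix.mulVec_smul, dotProduct_add,
          add_dotProduct, add_dotProduct, dotProduct_smul,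
          smul_dotProduct, smul_dotProduct, dotProduct_smul,
          aux_symm_dot hAs v w, hv]
        simp only [smul_eq_mul]
        ring
      rwa [expand] at h0
    set c := w ⬝ᵥ A.mulVec v with hcdef
    set d := w ⬝ᵥ A.mulVec w with hddef
    have h0 := habs (-(d+1)/(2*c))
    have h2c : (2:F)*c ≠ 0 := mul_ne_zero two_ne_zero hc
    have heq : 2*(-(d+1)/(2*c))*c = -(d+1) := by field_simp
    linarith [h0, heq.symm ▸ h0]
  funext i
  have := key (Pi.single i 1)
  rwa [single_dotProduct, one_mul] at this

lemma aux_mp_symm {M P : Matrix (Fin n) (Fin n) F} (hMs : M.IsSymm)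
    (h1 : M * P * M = M) (h2 : P * M * P = P)
    (h3 : (M * P)ᵀ = M * P) (h4 : (P * M)ᵀ = P * M) : Pᵀ = P := by
  have e1 : M * Pᵀ = P * M := by
    calc M * Pᵀ = Mᵀᵀ * Pᵀ := by rw [transpose_transpose]
    _ = (P * Mᵀ)ᵀ := by rw [transpose_mul]
    _ = (P * M)ᵀ := by rw [hMs.eq]
    _ = P * M := h4
  have e2 : Pᵀ * M = M * P := by
    calc Pᵀ * M = Pᵀ * Mᵀᵀ := by rw [transpose_transpose]
    _ = (Mᵀ * P)ᵀ := by rw [transpose_mul]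
    _ = (M * P)ᵀ := by rw [hMs.eq]
    _ = M * P := h3
  have q1 : M * Pᵀ * M = M := by
    have := congrArg transpose h1
    simp only [transpose_mul, hMs.eq, Matrix.mul_assoc] at this ⊢
    exact this
  have q2 : Pᵀ * M * Pᵀ = Pᵀ := by
    have := congrArg transpose h2
    simp only [transpose_mul, hMs.eq, Matrix.mul_assoc] at this ⊢
    exact this
  have step1 : P * (Pᵀ * M) = P := by
    rw [e2, ← Matrix.mul_assoc, h2]
  have step2 : (M * P) * Pᵀ = Pᵀ := by
    rw [← e2]; exact q2
  have hb : Pᵀ = P * M * Pᵀ := by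
    calc Pᵀ = (M * P) * Pᵀ := step2.symm
    _ = ((M * Pᵀ * M) * P) * Pᵀ := by rw [q1]
    _ = (M * Pᵀ) * ((M * P) * Pᵀ) := by simp only [Matrix.mul_assoc]
    _ = (M * Pᵀ) * Pᵀ := by rw [step2]
    _ = (P * M) * Pᵀ := by rw [e1]
  have ha : P = P * M * Pᵀ := by
    calc P = P * (Pᵀ * M) := step1.symm
    _ = P * (Pᵀ * (M * P * M)) := by rw [h1]
    _ = (P * (Pᵀ * M)) * (P * M) := by simp only [Matrix.mul_assoc]
    _ = P * (P * M) := by rw [step1]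
    _ = P * (M * Pᵀ) := by rw [← e1]
    _ = P * M * Pᵀ := by rw [Matrix.mul_assoc]
  exact hb.trans ha.symm

lemma aux_eq_zero_of_mulVec {N : Matrix (Fin n) (Fin n) F}
    (h : ∀ v, N.mulVec v = 0) : N = 0 := by
  ext i j
  have := congrFun (h (Pi.single j 1)) i
  simpa [Matrix.mulVec_single] using this

end Aux

theorem stmt_16 (F : Type*) [Field F] [LinearOrder F] [IsStrictOrderedRing F] (n : ℕ)
    (A B : Matrix (Fin n) (Fin n) F)
    (hAs : A.IsSymm) (hBs : B.IsSymm) (hA : PSD A) (hB : PSD B)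
    (P : Matrix (Fin n) (Fin n) F) (hP : IsMoorePenrose (A + B) P) :
    Sqsupseteq (A * P * B) A ∧ Sqsupseteq (A * P * B) B ∧
      ∀ C : Matrix (Fin n) (Fin n) F, C.IsSymm → PSD C →
        Sqsupseteq C A → Sqsupseteq C B → Sqsupseteq C (A * P * B) := by
  obtain ⟨h1, h2, h3, h4⟩ := hP
  have hMs : (A + B).IsSymm := hAs.add hBs
  have hPs : Pᵀ = P := aux_mp_symm hMs h1 h2 h3 h4
  have hMpsd : PSD (A + B) := by
    intro v
    rw [Matrix.add_mulVec, dotProduct_add]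
    exact add_nonneg (hA v) (hB v)
  -- kernel of A+B is contained in kernels of A and B
  have hker : ∀ v : Fin n → F, (A + B).mulVec v = 0 →
      A.mulVec v = 0 ∧ B.mulVec v = 0 := by
    intro v hv
    have h0 : v ⬝ᵥ (A + B).mulVec v = 0 := by rw [hv]; simp
    rw [Matrix.add_mulVec, dotProduct_add] at h0
    have hva : v ⬝ᵥ A.mulVec v = 0 := le_antisymm (by linarith [hB v]) (hA v)
    have hvb : v ⬝ᵥ B.mulVec v = 0 := le_antisymm (by linarith [hA v]) (hB v)
    exact ⟨aux_psd_kernel hAs hA hva, aux_psd_kernel hBs hB hvb⟩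
  -- A = A P M and B = B P M
  have hzero : ∀ v, (A + B).mulVec ((1 - P * (A + B)).mulVec v) = 0 := by
    intro v
    rw [Matrix.mulVec_mulVec]
    have : (A + B) * (1 - P * (A + B)) = 0 := by
      rw [Matrix.mul_sub, Matrix.mul_one, ← Matrix.mul_assoc, h1, sub_self]
    rw [this, Matrix.zero_mulVec]
  have hAPM : A * P * (A + B) = A := by
    have hz : A * (1 - P * (A + B)) = 0 := by
      apply aux_eq_zero_of_mulVec
      intro v
      rw [← Matrix.mulVec_mulVec]
      exact (hker _ (hzero v)).1
    rw [Matrix.mul_sub, Matrix.mul_one, sub_eq_zero] at hz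
    rw [Matrix.mul_assoc]
    exact hz.symm
  have hBPM : B * P * (A + B) = B := by
    have hz : B * (1 - P * (A + B)) = 0 := by
      apply aux_eq_zero_of_mulVec
      intro v
      rw [← Matrix.mulVec_mulVec]
      exact (hker _ (hzero v)).2
    rw [Matrix.mul_sub, Matrix.mul_one, sub_eq_zero] at hz
    rw [Matrix.mul_assoc]
    exact hz.symm
  -- transposed versions
  have hMPA : (A + B) * (P * A) = A := by
    have := congrArg transpose hAPM
    simp only [transpose_mul, hPs, hAs.eq, hMs.eq, Matrix.mul_assoc] at this
    exact this
  have hMPB : (A + B) * (P * B) = B := by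
    have := congrArg transpose hBPM
    simp only [transpose_mul, hPs, hBs.eq, hMs.eq, Matrix.mul_assoc] at this
    exact this
  -- key identities
  have key1 : A - A * P * B = A * P * A := by
    have hb : B = (A + B) - A := by abel
    calc A - A * P * B = A - A * P * ((A + B) - A) := by rw [← hb]
    _ = A - (A * P * (A + B) - A * P * A) := by rw [Matrix.mul_sub]
    _ = A - (A - A * P * A) := by rw [hAPM]
    _ = A * P * A := by abel
  have key2 : B - A * P * B = B * P * B := by
    have ha : A = (A + B) - B := by abel
    calc B - A * P * B = B - ((A + B) - B) * P * B := by rw [← ha]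
    _ = B - ((A + B) * P * B - B * P * B) := by rw [Matrix.sub_mul, Matrix.sub_mul]
    _ = B - (B - B * P * B) := by rw [Matrix.mul_assoc (A+B) P B, hMPB]
    _ = B * P * B := by abel
  -- positivity of P, A P A, B P B
  have hPpsd : PSD P := by
    intro v
    have hrw : P = Pᵀ * (A + B) * P := by rw [hPs]; exact h2.symm
    rw [hrw, aux_quad]
    exact hMpsd _
  have hAPA : PSD (A * P * A) := by
    intro v
    have hrw : A * P * A = Aᵀ * P * A := by rw [hAs.eq]
    rw [hrw, aux_quad]
    exact hPpsd _
  have hBPB : PSD (B * P * B) := by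
    intro v
    have hrw : B * P * B = Bᵀ * P * B := by rw [hBs.eq]
    rw [hrw, aux_quad]
    exact hPpsd _
  refine ⟨⟨1, ?_⟩, ⟨1, ?_⟩, ?_⟩
  · simpa [key1] using hAPA
  · simpa [key2] using hBPB
  · rintro C hCs hC ⟨r, hr⟩ ⟨s, hs⟩
    refine ⟨2 * (r + s), ?_⟩
    intro v
    obtain ⟨u, hu⟩ : ∃ u : Fin n → F, u = (P * B).mulVec v := ⟨_, rfl⟩
    obtain ⟨w, hw⟩ : ∃ w : Fin n → F, w = v - u := ⟨_, rfl⟩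
    have huw : u + w = v := by rw [hw]; abel
    -- the decomposition identity
    have idA : (P * B)ᵀ * A * (P * B) + (1 - P * B)ᵀ * B * (1 - P * B) = A * P * B := by
      have ht1 : (P * B)ᵀ = B * P := by rw [transpose_mul, hPs, hBs.eq]
      have ht2 : (1 - P * B)ᵀ = 1 - B * P := by
        rw [transpose_sub, transpose_one, transpose_mul, hPs, hBs.eq]
      rw [ht1, ht2]
      have key2' : A * P * B = B - B * P * B := by rw [← key2]; abel
      rw [key2']
      have h2' : B * (P * (A + B) * P) * B = B * P * B := by rw [h2]
      have E : B * P * A * (P * B) + B * P * (B * (P * B)) = B * P * B := by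
        calc B * P * A * (P * B) + B * P * (B * (P * B))
            = B * (P * (A + B) * P) * B := by noncomm_ring
        _ = B * P * B := h2'
      calc B * P * A * (P * B) + (1 - B * P) * B * (1 - P * B)
          = (B * P * A * (P * B) + B * P * (B * (P * B))) + B - B * P * B - B * P * B := by
            noncomm_ring
      _ = B - B * P * B := by rw [E]; abel
    -- quadratic form of A*P*B
    have hqv : v ⬝ᵥ (A * P * B).mulVec v = u ⬝ᵥ A.mulVec u + w ⬝ᵥ B.mulVec w := by
      have h1v : (1 - P * B).mulVec v = w := by
        rw [Matrix.sub_mulVec, Matrix.one_mulVec, hw, hu]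
      rw [← idA, Matrix.add_mulVec, dotProduct_add, aux_quad, aux_quad, h1v, ← hu]
    -- C inequality
    have hcross : u ⬝ᵥ C.mulVec w = w ⬝ᵥ C.mulVec u := aux_symm_dot hCs u w
    have hdiff : 0 ≤ (u - w) ⬝ᵥ C.mulVec (u - w) := hC _
    have hduw : (u - w) ⬝ᵥ C.mulVec (u - w)
        = u ⬝ᵥ C.mulVec u - 2 * (u ⬝ᵥ C.mulVec w) + w ⬝ᵥ C.mulVec w := by
      simp only [Matrix.mulVec_sub, dotProduct_sub, sub_dotProduct]
      rw [hcross]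
      ring
    have hvC : v ⬝ᵥ C.mulVec v
        = u ⬝ᵥ C.mulVec u + 2 * (u ⬝ᵥ C.mulVec w) + w ⬝ᵥ C.mulVec w := by
      rw [← huw]
      simp only [Matrix.mulVec_add, dotProduct_add, add_dotProduct]
      rw [hcross]
      ring
    have hru : u ⬝ᵥ C.mulVec u ≤ (r : F) * (u ⬝ᵥ A.mulVec u) := by
      have := hr u
      rw [Matrix.sub_mulVec, dotProduct_sub, Matrix.smul_mulVec,
        dotProduct_smul, smul_eq_mul] at this
      linarith
    have hsw : w ⬝ᵥ C.mulVec w ≤ (s : F) * (w ⬝ᵥ B.mulVec w) := by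
      have := hs w
      rw [Matrix.sub_mulVec, dotProduct_sub, Matrix.smul_mulVec,
        dotProduct_smul, smul_eq_mul] at this
      linarith
    have hau : 0 ≤ u ⬝ᵥ A.mulVec u := hA u
    have hbw : 0 ≤ w ⬝ᵥ B.mulVec w := hB w
    rw [Matrix.sub_mulVec, dotProduct_sub, Matrix.smul_mulVec,
      dotProduct_smul, smul_eq_mul, hqv]
    push_cast
    nlinarith [hru, hsw, hau, hbw, hvC, hduw, hdiff, (Nat.cast_nonneg r : (0:F) ≤ r),
      (Nat.cast_nonneg s : (0:F) ≤ s)]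
end

section
/- Let F be a linearly ordered field and w, z ∈ Fⁿ vectors such that r·zzᵀ − wwᵀ is positive semidefinite for some r ∈ F, r ≥ 0. Then there exists α ∈ F with w = α·z and α² ≤ r. -/
open Matrix

lemma quad_vecMulVec {F : Type*} [Field F] [LinearOrder F] [IsStrictOrderedRing F] {n : ℕ} (a v : Fin n → F) :
    v ⬝ᵥ (Matrix.vecMulVec a a).mulVec v = (a ⬝ᵥ v)^2 := by
  simp [vecMulVec, mulVec, dotProduct, Finset.mul_sum, Finset.sum_mul, sq]
  rw [Finset.sum_comm]
  congr 1; ext i; congr 1; ext j; ring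

theorem stmt_19 (F : Type*) [Field F] [LinearOrder F] [IsStrictOrderedRing F] (n : ℕ)
    (w z : Fin n → F) (r : F) (hr : 0 ≤ r)
    (h : PSD (r • Matrix.vecMulVec z z - Matrix.vecMulVec w w)) :
    ∃ α : F, w = α • z ∧ α ^ 2 ≤ r := by
  have key : ∀ v : Fin n → F, (w ⬝ᵥ v)^2 ≤ r * (z ⬝ᵥ v)^2 := by
    intro v
    have := h v
    rw [sub_mulVec, dotProduct_sub, smul_mulVec, dotProduct_smul,
      quad_vecMulVec, quad_vecMulVec] at this
    simpa using sub_nonneg.mp this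
  by_cases hz : z = 0
  · refine ⟨0, ?_, by simpa using hr⟩
    subst hz
    funext i
    have := key (Pi.single i 1)
    simp [dotProduct_single] at this
    have : w i ^ 2 ≤ 0 := by simp [this]
    have := pow_eq_zero_iff (n := 2) (by norm_num) |>.mp (le_antisymm this (sq_nonneg _))
    simp [this]
  · obtain ⟨j, hj⟩ : ∃ j, z j ≠ 0 := by
      by_contra hc; push_neg at hc; exact hz (funext hc)
    refine ⟨w j / z j, ?_, ?_⟩
    · funext i
      set v : Fin n → F := z j • (Pi.single i 1 : Fin n → F) - z i • (Pi.single j 1 : Fin n → F) with hvdef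
      have hv := key v
      have hz0 : z ⬝ᵥ v = 0 := by
        simp [hvdef, dotProduct_sub, dotProduct_smul, dotProduct_single]; ring
      rw [hz0] at hv
      have hw0 : w ⬝ᵥ v = 0 := by
        have h2 : (w ⬝ᵥ v)^2 ≤ 0 := by simpa using hv
        exact pow_eq_zero_iff (n := 2) (by norm_num) |>.mp
          (le_antisymm h2 (sq_nonneg _))
      simp [hvdef, dotProduct_sub, dotProduct_smul, dotProduct_single] at hw0
      have hwz : w i * z j = w j * z i := by linarith
      rw [Pi.smul_apply, smul_eq_mul, div_mul_eq_mul_div, eq_div_iff hj]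
      linarith [hwz]
    · have hkj := key (Pi.single j 1)
      simp [dotProduct_single] at hkj
      rw [div_pow, div_le_iff₀ (by positivity)]
      simpa [sq] using hkj
end
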